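/- Power nonexpansivity of the Thompson metric: for Hermitian positive definite X, Y and t ∈ [−1,1], δ_T(X^t, Y^t) ≤ |t| · δ_T(X,Y). -/

import Mathlib

set_option linter.unusedSectionVars false
set_option maxHeartbeats 1000000

namespace CGO

open Matrix
open scoped ComplexOrder

variable {n : Type*} [Fintype n] [DecidableEq n]

/-- The Löwner partial order `A ⪯ B` on matrices: `B - A` is positive semidefinite. -/
def LoewnerLE (A B : Matrix n n ℂ) : Prop := (B - A).PosSemidef

lemma cfc_isHermitian {A : Matrix n n ℂ} (hA : A.IsHermitian) (f : ℝ → ℝ) :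
    (hA.cfc f).IsHermitian := by
  rw [Matrix.IsHermitian.cfc, Unitary.conjStarAlgAut_apply, Matrix.star_eq_conjTranspose]
  exact Matrix.isHermitian_mul_mul_conjTranspose _
    (Matrix.isHermitian_diagonal_of_self_adjoint _ (by
      show star _ = _
      funext i; simp [Function.comp]))

/-- Real powers of a Hermitian matrix, defined through the spectral theorem
(for positive definite `A`, this is the usual power `A^t`). -/
noncomputable def mpow {A : Matrix n n ℂ} (hA : A.IsHermitian) (t : ℝ) : Matrix n n ℂ :=
  hA.cfc (fun x => x ^ t)

lemma mpow_isHermitian {A : Matrix n n ℂ} (hA : A.IsHermitian) (t : ℝ) :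
    (mpow hA t).IsHermitian := cfc_isHermitian hA _

lemma mul_mul_isHermitian {A B : Matrix n n ℂ} (hA : A.IsHermitian) (hB : B.IsHermitian) :
    (A * B * A).IsHermitian := by
  have h := Matrix.isHermitian_mul_mul_conjTranspose A hB
  rwa [hA.eq] at h

/-- The weighted matrix geometric mean `A #ₜ B := A^{1/2} (A^{-1/2} B A^{-1/2})^t A^{1/2}`.
The midpoint `t = 1/2` is the matrix geometric mean `A # B`. -/
noncomputable def wgmean {A B : Matrix n n ℂ} (hA : A.PosDef) (hB : B.PosDef) (t : ℝ) :
    Matrix n n ℂ :=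
  mpow hA.1 (1/2) *
    mpow (mul_mul_isHermitian (mpow_isHermitian hA.1 (-(1/2))) hB.1) t *
    mpow hA.1 (1/2)

lemma wgmean_isHermitian {A B : Matrix n n ℂ} (hA : A.PosDef) (hB : B.PosDef) (t : ℝ) :
    (wgmean hA hB t).IsHermitian := by
  have h := mul_mul_isHermitian (mpow_isHermitian hA.1 (1/2))
    (mpow_isHermitian (mul_mul_isHermitian (mpow_isHermitian hA.1 (-(1/2))) hB.1) t)
  simpa [wgmean, mul_assoc] using h

lemma cfc_eq_conj {A : Matrix n n ℂ} (hA : A.IsHermitian) (f : ℝ → ℝ) :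
    hA.cfc f = (hA.eigenvectorUnitary : Matrix n n ℂ) *
      diagonal (RCLike.ofReal ∘ f ∘ hA.eigenvalues) *
      star (hA.eigenvectorUnitary : Matrix n n ℂ) := by
  rw [Matrix.IsHermitian.cfc, Unitary.conjStarAlgAut_apply]

section CfcAlgebra

variable {A : Matrix n n ℂ} (hA : A.IsHermitian)

lemma star_eigU_mul : (star (Matrix.IsHermitian.eigenvectorUnitary hA : Matrix n n ℂ)) *
    (Matrix.IsHermitian.eigenvectorUnitary hA : Matrix n n ℂ) = 1 :=
  Unitary.coe_star_mul_self _

lemma eigU_mul_star : (Matrix.IsHermitian.eigenvectorUnitary hA : Matrix n n ℂ) *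
    (star (Matrix.IsHermitian.eigenvectorUnitary hA : Matrix n n ℂ)) = 1 :=
  Unitary.coe_mul_star_self _

lemma isUnit_eigU : IsUnit (Matrix.IsHermitian.eigenvectorUnitary hA : Matrix n n ℂ) :=
  ⟨Unitary.toUnits hA.eigenvectorUnitary, rfl⟩

lemma cfc_mul_cfc (f g : ℝ → ℝ) :
    hA.cfc f * hA.cfc g = hA.cfc (fun x => f x * g x) := by
  set U : Matrix n n ℂ := (Matrix.IsHermitian.eigenvectorUnitary hA : Matrix n n ℂ) with hU
  have h : ∀ D E : Matrix n n ℂ, (U * D * star U) * (U * E * star U) = U * (D * E) * star U := by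
    intro D E
    calc (U * D * star U) * (U * E * star U) = U * (D * ((star U * U) * E)) * star U := by
          simp only [mul_assoc]
      _ = U * (D * E) * star U := by rw [star_eigU_mul hA]; simp [mul_assoc]
  have hd : (diagonal (RCLike.ofReal ∘ f ∘ hA.eigenvalues) :
        Matrix n n ℂ) * diagonal (RCLike.ofReal ∘ g ∘ hA.eigenvalues)
      = diagonal (RCLike.ofReal ∘ (fun x => f x * g x) ∘ hA.eigenvalues) := by
    rw [diagonal_mul_diagonal]
    have : (fun i => (RCLike.ofReal (f (hA.eigenvalues i)) : ℂ)
        * RCLike.ofReal (g (hA.eigenvalues i)))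
        = RCLike.ofReal ∘ (fun x => f x * g x) ∘ hA.eigenvalues := by
      funext i; simp [Function.comp]
    rw [← this]
    rfl
  rw [cfc_eq_conj, cfc_eq_conj, cfc_eq_conj, h, hd]

lemma cfc_congr_eigs {f g : ℝ → ℝ} (h : ∀ i, f (hA.eigenvalues i) = g (hA.eigenvalues i)) :
    hA.cfc f = hA.cfc g := by
  rw [Matrix.IsHermitian.cfc, Matrix.IsHermitian.cfc]
  have hd : (RCLike.ofReal ∘ f ∘ hA.eigenvalues : n → ℂ)
      = RCLike.ofReal ∘ g ∘ hA.eigenvalues := by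
    funext i; simp [Function.comp, h i]
  rw [hd]

lemma cfc_const_one : hA.cfc (fun _ => 1) = 1 := by
  rw [cfc_eq_conj]
  have : (diagonal (RCLike.ofReal ∘ (fun _ => (1:ℝ)) ∘ hA.eigenvalues) : Matrix n n ℂ) = 1 := by
    have : (RCLike.ofReal ∘ (fun _ => (1:ℝ)) ∘ hA.eigenvalues : n → ℂ) = fun _ => 1 := by
      funext i; simp [Function.comp]
    rw [this, diagonal_one]
  rw [this, mul_one, eigU_mul_star hA]

lemma cfc_id_eq : hA.cfc (fun x => x) = A := by
  rw [Matrix.IsHermitian.cfc]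
  exact (Matrix.IsHermitian.spectral_theorem hA).symm

lemma cfc_sub_cfc (f g : ℝ → ℝ) :
    hA.cfc f - hA.cfc g = hA.cfc (fun x => f x - g x) := by
  rw [cfc_eq_conj, cfc_eq_conj, cfc_eq_conj,
    ← Matrix.sub_mul, ← Matrix.mul_sub, diagonal_sub]
  have hd : (fun i => (RCLike.ofReal ∘ f ∘ hA.eigenvalues) i
        - (RCLike.ofReal ∘ g ∘ hA.eigenvalues) i : n → ℂ)
      = RCLike.ofReal ∘ (fun x => f x - g x) ∘ hA.eigenvalues := by
    funext i; simp [Function.comp]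
  rw [hd]

lemma cfc_posSemidef {f : ℝ → ℝ} (h : ∀ i, 0 ≤ f (hA.eigenvalues i)) :
    (hA.cfc f).PosSemidef := by
  rw [cfc_eq_conj, Matrix.star_eq_conjTranspose]
  exact Matrix.PosSemidef.mul_mul_conjTranspose_same
    (Matrix.PosSemidef.diagonal fun i => by
      simpa using Complex.zero_le_real.mpr (h i)) _

lemma posDef_conj {P : Matrix n n ℂ} (hP : P.PosDef) {M : Matrix n n ℂ} (hM : IsUnit M) :
    (M * P * Mᴴ).PosDef := by
  refine .of_dotProduct_mulVec_pos (Matrix.isHermitian_mul_mul_conjTranspose M hP.1) fun x hx => ?_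
  have hinj : Function.Injective (Mᴴ.mulVec) :=
    Matrix.mulVec_injective_iff_isUnit.mpr ((Matrix.isUnit_conjTranspose M).mpr hM)
  have hx' : Mᴴ *ᵥ x ≠ 0 := by
    intro h
    exact hx (hinj (by simpa using h))
  have key : star x ⬝ᵥ ((M * P * Mᴴ) *ᵥ x) = star (Mᴴ *ᵥ x) ⬝ᵥ (P *ᵥ (Mᴴ *ᵥ x)) := by
    simp only [← mulVec_mulVec, dotProduct_mulVec, star_mulVec, conjTranspose_conjTranspose]
  rw [key]
  exact hP.dotProduct_mulVec_pos hx'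

lemma cfc_posDef {f : ℝ → ℝ} (h : ∀ i, 0 < f (hA.eigenvalues i)) :
    (hA.cfc f).PosDef := by
  rw [cfc_eq_conj, Matrix.star_eq_conjTranspose]
  refine posDef_conj ?_ (isUnit_eigU hA)
  rw [Matrix.posDef_diagonal_iff]
  intro i
  simpa using Complex.zero_lt_real.mpr (h i)

end CfcAlgebra

lemma mpow_isHermitian' {A : Matrix n n ℂ} (hA : A.IsHermitian) (t : ℝ) :
    (mpow hA t).IsHermitian := mpow_isHermitian hA t

section Mpow

variable {A : Matrix n n ℂ} (hA : A.PosDef)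

lemma mpow_add (s t : ℝ) : mpow hA.1 s * mpow hA.1 t = mpow hA.1 (s + t) := by
  rw [mpow, mpow, mpow, cfc_mul_cfc]
  exact cfc_congr_eigs hA.1 fun i => (Real.rpow_add (hA.eigenvalues_pos i) s t).symm

lemma mpow_zero : mpow hA.1 0 = 1 := by
  rw [mpow]
  rw [cfc_congr_eigs hA.1 (g := fun _ => 1) (fun i => Real.rpow_zero _)]
  exact cfc_const_one hA.1

lemma mpow_one : mpow hA.1 1 = A := by
  rw [mpow]
  rw [cfc_congr_eigs hA.1 (g := fun x => x) (fun i => Real.rpow_one _)]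
  exact cfc_id_eq hA.1

lemma mpow_posDef (t : ℝ) : (mpow hA.1 t).PosDef :=
  cfc_posDef hA.1 fun i => Real.rpow_pos_of_pos (hA.eigenvalues_pos i) t

lemma mpow_inv (t : ℝ) : (mpow hA.1 t)⁻¹ = mpow hA.1 (-t) :=
  Matrix.inv_eq_right_inv (by rw [mpow_add hA t (-t)]; simpa using mpow_zero hA)

lemma inv_eq_mpow_neg_one : A⁻¹ = mpow hA.1 (-1) := by
  conv_lhs => rw [← mpow_one hA]
  simpa using mpow_inv hA 1

end Mpow

section Order

lemma loewner_conj {A B : Matrix n n ℂ} (h : (B - A).PosSemidef) (M : Matrix n n ℂ) :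
    (Mᴴ * B * M - Mᴴ * A * M).PosSemidef := by
  have := h.conjTranspose_mul_mul_same M
  rwa [Matrix.mul_sub, Matrix.sub_mul] at this

lemma psd_smul_real {P : Matrix n n ℂ} (hP : P.PosSemidef) {c : ℝ} (hc : 0 ≤ c) :
    ((c : ℝ) • P).PosSemidef := by
  refine .of_dotProduct_mulVec_nonneg ?_ fun x => ?_
  · show ((c:ℝ) • P)ᴴ = _
    rw [Matrix.conjTranspose_smul, hP.1.eq]
    congr 1
  · have : star x ⬝ᵥ (((c:ℝ) • P) *ᵥ x) = (c : ℝ) • (star x ⬝ᵥ (P *ᵥ x)) := by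
      rw [Matrix.smul_mulVec, dotProduct_smul]
    rw [this]
    have h0 := hP.dotProduct_mulVec_nonneg x
    rw [Complex.nonneg_iff] at h0 ⊢
    constructor
    · simpa [Complex.smul_re] using mul_nonneg hc h0.1
    · simp [Complex.smul_im, ← h0.2]

lemma quad_conjTranspose_mul_self (N : Matrix n n ℂ) (v : n → ℂ) :
    star v ⬝ᵥ ((Nᴴ * N) *ᵥ v) = star (N *ᵥ v) ⬝ᵥ (N *ᵥ v) := by
  simp only [← mulVec_mulVec, dotProduct_mulVec, star_mulVec]

/-- quadratic norm bound: `‖M v‖² ≤ c ‖v‖²` in the complex order -/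
def qb (M : Matrix n n ℂ) (c : ℝ) : Prop :=
  ∀ v : n → ℂ, star (M *ᵥ v) ⬝ᵥ (M *ᵥ v) ≤ (c : ℂ) * (star v ⬝ᵥ v)

lemma cmul_le_cmul {c : ℝ} (hc : 0 ≤ c) {z w : ℂ} (h : z ≤ w) :
    (c : ℂ) * z ≤ (c : ℂ) * w := by
  rw [Complex.le_def] at h ⊢
  constructor
  · simp only [Complex.mul_re, Complex.ofReal_re, Complex.ofReal_im, zero_mul, sub_zero]
    exact mul_le_mul_of_nonneg_left h.1 hc
  · simp only [Complex.mul_im, Complex.ofReal_re, Complex.ofReal_im, zero_mul, add_zero,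
      zero_add]
    rw [h.2]

lemma qb_of_loewner {M : Matrix n n ℂ} {c : ℝ}
    (h : ((c : ℝ) • (1 : Matrix n n ℂ) - Mᴴ * M).PosSemidef) : qb M c := by
  intro v
  have h0 := h.dotProduct_mulVec_nonneg v
  have expand : star v ⬝ᵥ (((c : ℝ) • (1 : Matrix n n ℂ) - Mᴴ * M) *ᵥ v)
      = (c : ℂ) * (star v ⬝ᵥ v) - star (M *ᵥ v) ⬝ᵥ (M *ᵥ v) := by
    rw [Matrix.sub_mulVec, dotProduct_sub, quad_conjTranspose_mul_self,
      Matrix.smul_mulVec, Matrix.one_mulVec, dotProduct_smul]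
    rw [Complex.real_smul]
  rw [expand] at h0
  exact sub_nonneg.mp h0

end Order

section Core

lemma qb_comp {M N : Matrix n n ℂ} {c d : ℝ} (hc : 0 ≤ c) (hM : qb M c) (hN : qb N d) :
    qb (M * N) (c * d) := by
  intro v
  have h1 : (M * N) *ᵥ v = M *ᵥ (N *ᵥ v) := (mulVec_mulVec v M N).symm
  rw [h1]
  calc star (M *ᵥ (N *ᵥ v)) ⬝ᵥ (M *ᵥ (N *ᵥ v)) ≤ (c : ℂ) * (star (N *ᵥ v) ⬝ᵥ (N *ᵥ v)) := hM _
    _ ≤ (c : ℂ) * ((d : ℂ) * (star v ⬝ᵥ v)) := cmul_le_cmul hc (hN v)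
    _ = ((c * d : ℝ) : ℂ) * (star v ⬝ᵥ v) := by push_cast; ring

lemma dot_star_self_re_pos {u : n → ℂ} (hu : u ≠ 0) : 0 < (star u ⬝ᵥ u).re := by
  have h1 : 0 ≤ star u ⬝ᵥ u := dotProduct_star_self_nonneg u
  have h2 : star u ⬝ᵥ u ≠ 0 := by
    rw [Ne, dotProduct_star_self_eq_zero]
    exact hu
  rcases Complex.nonneg_iff.mp h1 with ⟨hre, him⟩
  rcases lt_or_eq_of_le hre with h | h
  · exact h
  · exfalso; exact h2 (Complex.ext h.symm him.symm)

lemma eig_transport {H K P Q : Matrix n n ℂ} (hPQ : Q * P = 1) (hK : K * P = P * H)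
    {v : n → ℂ} {lam : ℝ} (hv : H *ᵥ v = lam • v) (hv0 : v ≠ 0) :
    K *ᵥ (P *ᵥ v) = lam • (P *ᵥ v) ∧ P *ᵥ v ≠ 0 := by
  constructor
  · rw [mulVec_mulVec, hK, ← mulVec_mulVec, hv, Matrix.mulVec_smul]
  · intro h0
    have h1 : (Q * P) *ᵥ v = 0 := by rw [← mulVec_mulVec, h0, Matrix.mulVec_zero]
    rw [hPQ, Matrix.one_mulVec] at h1
    exact hv0 h1

lemma sq_le_of_qb {K : Matrix n n ℂ} {c : ℝ} (hK : qb K c) {u : n → ℂ} (hu : u ≠ 0)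
    {lam : ℝ} (h : K *ᵥ u = lam • u) : lam ^ 2 ≤ c := by
  have hq := hK u
  rw [h] at hq
  have hstar : star (lam • u) ⬝ᵥ (lam • u) = ((lam ^ 2 : ℝ) : ℂ) * (star u ⬝ᵥ u) := by
    rw [star_smul, star_trivial, smul_dotProduct, dotProduct_smul, smul_smul]
    rw [Complex.real_smul]
    push_cast; ring
  rw [hstar] at hq
  have hre := (Complex.le_def.mp hq).1
  have him := (Complex.nonneg_iff.mp (dotProduct_star_self_nonneg u)).2
  simp only [Complex.mul_re, Complex.ofReal_re, Complex.ofReal_im, zero_mul, sub_zero,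
    ← him, mul_zero] at hre
  have hz := dot_star_self_re_pos hu
  exact le_of_mul_le_mul_right hre hz

lemma smul_one_eq_cfc {H : Matrix n n ℂ} (hH : H.IsHermitian) (c : ℝ) :
    (c : ℝ) • (1 : Matrix n n ℂ) = hH.cfc (fun _ => c) := by
  rw [cfc_eq_conj]
  have hd : (diagonal (RCLike.ofReal ∘ (fun _ => c) ∘ hH.eigenvalues) : Matrix n n ℂ)
      = (c : ℝ) • 1 := by
    ext i j
    by_cases h : i = j <;>
      simp [Matrix.diagonal_apply, Matrix.one_apply, h, Complex.real_smul]
  rw [hd, mul_smul_comm, smul_mul_assoc, mul_one, eigU_mul_star hH]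

lemma herm_le_smul_one {H : Matrix n n ℂ} (hH : H.IsHermitian) {c : ℝ}
    (h : ∀ i, hH.eigenvalues i ≤ c) :
    ((c : ℝ) • (1 : Matrix n n ℂ) - H).PosSemidef := by
  rw [smul_one_eq_cfc hH c]
  nth_rewrite 2 [← cfc_id_eq hH]
  rw [cfc_sub_cfc]
  exact cfc_posSemidef hH fun i => sub_nonneg.mpr (h i)

lemma eig_le_of_le_smul_one {H : Matrix n n ℂ} (hH : H.IsHermitian) {c : ℝ}
    (h : ((c : ℝ) • (1 : Matrix n n ℂ) - H).PosSemidef) (i : n) : hH.eigenvalues i ≤ c := by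
  set v : n → ℂ := ⇑(hH.eigenvectorBasis i) with hvdef
  have hv0 : v ≠ 0 := by
    intro h0
    apply hH.eigenvectorBasis.orthonormal.ne_zero i
    ext j
    exact congrFun h0 j
  have hv : H *ᵥ v = hH.eigenvalues i • v := hH.mulVec_eigenvectorBasis i
  have h2 := h.dotProduct_mulVec_nonneg v
  have expand : ((c : ℝ) • (1 : Matrix n n ℂ) - H) *ᵥ v = ((c - hH.eigenvalues i : ℝ)) • v := by
    rw [Matrix.sub_mulVec, Matrix.smul_mulVec, Matrix.one_mulVec, hv, sub_smul]
  rw [expand, dotProduct_smul, Complex.real_smul] at h2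
  have hre := (Complex.nonneg_iff.mp h2).1
  have him := (Complex.nonneg_iff.mp (dotProduct_star_self_nonneg v)).2
  simp only [Complex.mul_re, Complex.ofReal_re, Complex.ofReal_im, zero_mul, sub_zero,
    ← him, mul_zero] at hre
  have hz := dot_star_self_re_pos hv0
  nlinarith [hre, hz]

end Core

section LHCore

variable {X Y : Matrix n n ℂ}

lemma mpow_merge {A : Matrix n n ℂ} (hA : A.PosDef) {a b c : ℝ} (h : a + b = c) :
    mpow hA.1 a * mpow hA.1 b = mpow hA.1 c := by rw [mpow_add hA, h]

lemma mpow_fuse {A : Matrix n n ℂ} (hA : A.PosDef) {a b c : ℝ} (h : a + b = c)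
    (Z : Matrix n n ℂ) : mpow hA.1 a * (mpow hA.1 b * Z) = mpow hA.1 c * Z := by
  rw [← mul_assoc, mpow_add hA, h]

lemma mpow_collapse {A : Matrix n n ℂ} (hA : A.PosDef) {a b : ℝ} (h : a + b = 0)
    (Z : Matrix n n ℂ) : mpow hA.1 a * (mpow hA.1 b * Z) = Z := by
  rw [← mul_assoc, mpow_add hA, h, mpow_zero hA, one_mul]

lemma mpow_collapse' {A : Matrix n n ℂ} (hA : A.PosDef) {a b : ℝ} (h : a + b = 0) :
    mpow hA.1 a * mpow hA.1 b = 1 := by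
  rw [mpow_add hA, h, mpow_zero hA]

lemma cfc_smul_real {A : Matrix n n ℂ} (hA : A.IsHermitian) (c : ℝ) (f : ℝ → ℝ) :
    (c : ℝ) • hA.cfc f = hA.cfc (fun x => c * f x) := by
  rw [cfc_eq_conj, cfc_eq_conj, ← smul_mul_assoc, ← mul_smul_comm]
  have hd : (c : ℝ) • (diagonal (RCLike.ofReal ∘ f ∘ hA.eigenvalues) : Matrix n n ℂ)
      = diagonal (RCLike.ofReal ∘ (fun x => c * f x) ∘ hA.eigenvalues) := by
    ext i j
    by_cases h : i = j <;>
      simp [Matrix.diagonal_apply, h, Complex.real_smul]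
  rw [hd]

lemma inv_antitone_scaled (hX : X.PosDef) (hY : Y.PosDef) {c : ℝ}
    (hc : 0 < c) (r : ℝ)
    (h : ((c : ℝ) • mpow hY.1 r - mpow hX.1 r).PosSemidef) :
    ((c : ℝ) • mpow hX.1 (-r) - mpow hY.1 (-r)).PosSemidef := by
  have hMh : (mpow hY.1 (-(r/2)))ᴴ = mpow hY.1 (-(r/2)) := (mpow_isHermitian' hY.1 _).eq
  have hCpd : (mpow hY.1 (-(r/2)) * mpow hX.1 r * mpow hY.1 (-(r/2))).PosDef := by
    have := posDef_conj (mpow_posDef hX r) (mpow_posDef hY (-(r/2))).isUnit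
    rwa [hMh] at this
  set C := mpow hY.1 (-(r/2)) * mpow hX.1 r * mpow hY.1 (-(r/2)) with hCdef
  have hC1 : ((c : ℝ) • (1 : Matrix n n ℂ) - C).PosSemidef := by
    have h2 := loewner_conj h (mpow hY.1 (-(r/2)))
    rw [hMh] at h2
    have e1 : mpow hY.1 (-(r/2)) * ((c : ℝ) • mpow hY.1 r) * mpow hY.1 (-(r/2))
        = (c : ℝ) • (1 : Matrix n n ℂ) := by
      rw [mul_smul_comm, smul_mul_assoc, mpow_add hY, mpow_add hY,
        show -(r/2) + r + -(r/2) = 0 by ring, mpow_zero hY]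
    rwa [e1] at h2
  have heig : ∀ i, hCpd.1.eigenvalues i ≤ c := eig_le_of_le_smul_one hCpd.1 hC1
  have hCiC : hCpd.1.cfc (fun x => x⁻¹) * C = 1 := by
    have h0 := cfc_mul_cfc hCpd.1 (fun x => x⁻¹) (fun x => x)
    rw [cfc_id_eq hCpd.1] at h0
    rw [h0, cfc_congr_eigs hCpd.1 (g := fun _ => 1)
      (fun i => inv_mul_cancel₀ (hCpd.eigenvalues_pos i).ne'), cfc_const_one hCpd.1]
  have hexp : C * (mpow hY.1 (r/2) * mpow hX.1 (-r) * mpow hY.1 (r/2)) = 1 := by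
    rw [hCdef]
    simp only [mul_assoc]
    rw [mpow_collapse hY (show -(r/2) + r/2 = 0 by ring),
      mpow_collapse hX (show r + -r = 0 by ring),
      mpow_collapse' hY (show -(r/2) + r/2 = 0 by ring)]
  have hCieq : hCpd.1.cfc (fun x => x⁻¹)
      = mpow hY.1 (r/2) * mpow hX.1 (-r) * mpow hY.1 (r/2) := by
    have h1 : C⁻¹ = hCpd.1.cfc (fun x => x⁻¹) := Matrix.inv_eq_left_inv hCiC
    have h2 : C⁻¹ = mpow hY.1 (r/2) * mpow hX.1 (-r) * mpow hY.1 (r/2) :=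
      Matrix.inv_eq_right_inv hexp
    rw [← h1, h2]
  have hpsd : ((c : ℝ) • hCpd.1.cfc (fun x => x⁻¹) - 1).PosSemidef := by
    rw [cfc_smul_real hCpd.1, ← cfc_const_one hCpd.1, cfc_sub_cfc]
    refine cfc_posSemidef hCpd.1 fun i => sub_nonneg.mpr ?_
    rw [← div_eq_mul_inv, le_div_iff₀ (hCpd.eigenvalues_pos i), one_mul]
    exact heig i
  rw [hCieq] at hpsd
  have h3 := loewner_conj hpsd (mpow hY.1 (-(r/2)))
  rw [hMh] at h3
  have e2 : mpow hY.1 (-(r/2)) * ((c : ℝ) • (mpow hY.1 (r/2) * mpow hX.1 (-r) * mpow hY.1 (r/2)))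
        * mpow hY.1 (-(r/2)) = (c : ℝ) • mpow hX.1 (-r) := by
    rw [mul_smul_comm, smul_mul_assoc]
    refine congrArg ((c : ℝ) • ·) ?_
    simp only [mul_assoc]
    rw [mpow_collapse hY (show -(r/2) + r/2 = 0 by ring),
      mpow_collapse' hY (show r/2 + -(r/2) = 0 by ring), mul_one]
  have e3 : mpow hY.1 (-(r/2)) * (1 : Matrix n n ℂ) * mpow hY.1 (-(r/2)) = mpow hY.1 (-r) := by
    rw [mul_one, mpow_merge hY (show -(r/2) + -(r/2) = -r by ring)]
  rwa [e2, e3] at h3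

lemma midpoint_step (hX : X.PosDef) (hY : Y.PosDef) {l : ℝ} (hl : 0 < l)
    {s r : ℝ}
    (hs : ((l ^ s : ℝ) • mpow hY.1 s - mpow hX.1 s).PosSemidef)
    (hr : ((l ^ r : ℝ) • mpow hY.1 r - mpow hX.1 r).PosSemidef) :
    ((l ^ ((s + r) / 2) : ℝ) • mpow hY.1 ((s + r) / 2) - mpow hX.1 ((s + r) / 2)).PosSemidef := by
  set w : ℝ := (s + r) / 2 with hw
  set N₂ := mpow hX.1 (s/2) * mpow hY.1 (-(s/2)) with hN2
  have hqb2 : qb N₂ (l ^ s) := by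
    apply qb_of_loewner
    have h2 := loewner_conj hs (mpow hY.1 (-(s/2)))
    rw [(mpow_isHermitian' hY.1 (-(s/2))).eq] at h2
    have e1 : mpow hY.1 (-(s/2)) * ((l ^ s : ℝ) • mpow hY.1 s) * mpow hY.1 (-(s/2))
        = (l ^ s : ℝ) • (1 : Matrix n n ℂ) := by
      rw [mul_smul_comm, smul_mul_assoc, mpow_add hY, mpow_add hY,
        show -(s/2) + s + -(s/2) = 0 by ring, mpow_zero hY]
    have e2 : mpow hY.1 (-(s/2)) * mpow hX.1 s * mpow hY.1 (-(s/2)) = N₂ᴴ * N₂ := by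
      rw [hN2, Matrix.conjTranspose_mul, (mpow_isHermitian' hX.1 (s/2)).eq,
        (mpow_isHermitian' hY.1 (-(s/2))).eq]
      simp only [mul_assoc]
      rw [mpow_fuse hX (show s/2 + s/2 = s by ring)]
    rwa [e1, e2] at h2
  set N₁ := mpow hY.1 (-(r/2)) * mpow hX.1 (r/2) with hN1
  have hqb1 : qb N₁ (l ^ r) := by
    apply qb_of_loewner
    have hinv := inv_antitone_scaled hX hY (Real.rpow_pos_of_pos hl r) r hr
    have h2 := loewner_conj hinv (mpow hX.1 (r/2))
    rw [(mpow_isHermitian' hX.1 (r/2)).eq] at h2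
    have e1 : mpow hX.1 (r/2) * ((l ^ r : ℝ) • mpow hX.1 (-r)) * mpow hX.1 (r/2)
        = (l ^ r : ℝ) • (1 : Matrix n n ℂ) := by
      rw [mul_smul_comm, smul_mul_assoc, mpow_add hX, mpow_add hX,
        show r/2 + -r + r/2 = 0 by ring, mpow_zero hX]
    have e2 : mpow hX.1 (r/2) * mpow hY.1 (-r) * mpow hX.1 (r/2) = N₁ᴴ * N₁ := by
      rw [hN1, Matrix.conjTranspose_mul, (mpow_isHermitian' hX.1 (r/2)).eq,
        (mpow_isHermitian' hY.1 (-(r/2))).eq]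
      simp only [mul_assoc]
      rw [mpow_fuse hY (show -(r/2) + -(r/2) = -r by ring)]
    rwa [e1, e2] at h2
  have hqbK : qb (N₁ * N₂) (l ^ r * l ^ s) :=
    qb_comp (le_of_lt (Real.rpow_pos_of_pos hl r)) hqb1 hqb2
  have hHpd : (mpow hY.1 (-(w/2)) * mpow hX.1 w * mpow hY.1 (-(w/2))).PosDef := by
    have := posDef_conj (mpow_posDef hX w) (mpow_posDef hY (-(w/2))).isUnit
    rwa [(mpow_isHermitian' hY.1 (-(w/2))).eq] at this
  set H := mpow hY.1 (-(w/2)) * mpow hX.1 w * mpow hY.1 (-(w/2)) with hHdef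
  have heig : ∀ i, hHpd.1.eigenvalues i ≤ l ^ w := by
    intro i
    set lam := hHpd.1.eigenvalues i with hlam
    set v : n → ℂ := ⇑(hHpd.1.eigenvectorBasis i) with hv
    have hv0 : v ≠ 0 := fun h0 => hHpd.1.eigenvectorBasis.orthonormal.ne_zero i
      (by ext j; exact congrFun h0 j)
    have hvv : H *ᵥ v = lam • v := hHpd.1.mulVec_eigenvectorBasis i
    have hPQ : mpow hY.1 (-((w - r)/2)) * mpow hY.1 ((w - r)/2) = 1 :=
      mpow_collapse' hY (by ring)
    have hKP : (N₁ * N₂) * mpow hY.1 ((w - r)/2) = mpow hY.1 ((w - r)/2) * H := by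
      rw [hN1, hN2, hHdef]
      simp only [mul_assoc]
      rw [mpow_fuse hX (show r/2 + s/2 = w by rw [hw]; ring),
        mpow_merge hY (show -(s/2) + (w - r)/2 = -(w/2) by rw [hw]; ring),
        mpow_fuse hY (show (w - r)/2 + -(w/2) = -(r/2) by rw [hw]; ring)]
    obtain ⟨hKu, hu0⟩ := eig_transport hPQ hKP hvv hv0
    have hsq : lam ^ 2 ≤ l ^ r * l ^ s := sq_le_of_qb hqbK hu0 hKu
    have hlw : 0 < l ^ w := Real.rpow_pos_of_pos hl w
    have hrs : l ^ r * l ^ s = (l ^ w) ^ 2 := by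
      rw [pow_two, ← Real.rpow_add hl, ← Real.rpow_add hl]
      congr 1
      rw [hw]; ring
    have hl0 : 0 ≤ lam := le_of_lt (hHpd.eigenvalues_pos i)
    nlinarith [hsq, hrs, hlw, hl0]
  have hpsd := herm_le_smul_one hHpd.1 heig
  have h3 := loewner_conj hpsd (mpow hY.1 (w/2))
  rw [(mpow_isHermitian' hY.1 (w/2)).eq] at h3
  have e1 : mpow hY.1 (w/2) * ((l ^ w : ℝ) • (1 : Matrix n n ℂ)) * mpow hY.1 (w/2)
      = (l ^ w : ℝ) • mpow hY.1 w := by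
    rw [mul_smul_comm, smul_mul_assoc, mul_one, mpow_merge hY (show w/2 + w/2 = w by ring)]
  have e2 : mpow hY.1 (w/2) * H * mpow hY.1 (w/2) = mpow hX.1 w := by
    rw [hHdef]
    simp only [mul_assoc]
    rw [mpow_collapse hY (show w/2 + -(w/2) = 0 by ring),
      mpow_collapse' hY (show -(w/2) + w/2 = 0 by ring), mul_one]
  rwa [e1, e2] at h3

end LHCore

section Approx

lemma psd_isClosed : IsClosed {M : Matrix n n ℂ | M.PosSemidef} := by
  have hset : {M : Matrix n n ℂ | M.PosSemidef}
      = {M : Matrix n n ℂ | Mᴴ = M} ∩ ⋂ x : n → ℂ, {M | 0 ≤ star x ⬝ᵥ (M *ᵥ x)} := by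
    ext M
    simp only [Set.mem_setOf_eq, Set.mem_inter_iff, Set.mem_iInter]
    exact ⟨fun h => ⟨h.1, h.dotProduct_mulVec_nonneg⟩, fun h => .of_dotProduct_mulVec_nonneg h.1 h.2⟩
  rw [hset]
  refine IsClosed.inter (isClosed_eq continuous_id.matrix_conjTranspose continuous_id) ?_
  refine isClosed_iInter fun x => ?_
  have hcont : Continuous fun M : Matrix n n ℂ => star x ⬝ᵥ (M *ᵥ x) := by
    unfold dotProduct Matrix.mulVec
    exact continuous_finset_sum _ fun i _ => (continuous_const.mul
      (continuous_finset_sum _ fun j _ =>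
        (by fun_prop)))
  have hclosed : IsClosed {z : ℂ | 0 ≤ z} := by
    have : {z : ℂ | 0 ≤ z} = Complex.re ⁻¹' Set.Ici 0 ∩ Complex.im ⁻¹' {0} := by
      ext z
      simp only [Set.mem_setOf_eq, Set.mem_inter_iff, Set.mem_preimage, Set.mem_Ici,
        Set.mem_singleton_iff, Complex.nonneg_iff]
      exact ⟨fun h => ⟨h.1, h.2.symm⟩, fun h => ⟨h.1, h.2.symm⟩⟩
    rw [this]
    exact (isClosed_Ici.preimage Complex.continuous_re).inter
      (isClosed_singleton.preimage Complex.continuous_im)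
  exact hclosed.preimage hcont

lemma rpow_fun_continuous {a : ℝ} (ha : 0 < a) : Continuous fun t : ℝ => a ^ t := by
  have : (fun t : ℝ => a ^ t) = fun t => Real.exp (Real.log a * t) :=
    funext fun t => Real.rpow_def_of_pos ha t
  rw [this]
  exact Real.continuous_exp.comp (continuous_const.mul continuous_id)

lemma mpow_continuous {A : Matrix n n ℂ} (hA : A.PosDef) :
    Continuous fun t : ℝ => mpow hA.1 t := by
  have : (fun t : ℝ => mpow hA.1 t) = fun t =>
      (Matrix.IsHermitian.eigenvectorUnitary hA.1 : Matrix n n ℂ) *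
        diagonal (RCLike.ofReal ∘ (fun x => x ^ t) ∘ hA.1.eigenvalues) *
        star (Matrix.IsHermitian.eigenvectorUnitary hA.1 : Matrix n n ℂ) := by
    funext t
    rw [mpow, cfc_eq_conj]
  rw [this]
  refine Continuous.matrix_mul (Continuous.matrix_mul continuous_const ?_) continuous_const
  refine Continuous.matrix_diagonal ?_
  refine continuous_pi fun i => ?_
  exact Complex.continuous_ofReal.comp (rpow_fun_continuous (hA.eigenvalues_pos i))

lemma LH_dyadic {X Y : Matrix n n ℂ} (hX : X.PosDef) (hY : Y.PosDef) {l : ℝ} (hl : 0 < l)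
    (h1 : ((l : ℝ) • Y - X).PosSemidef) :
    ∀ (k j : ℕ), j ≤ 2 ^ k →
      ((l ^ ((j : ℝ) / 2 ^ k) : ℝ) • mpow hY.1 ((j : ℝ) / 2 ^ k)
        - mpow hX.1 ((j : ℝ) / 2 ^ k)).PosSemidef := by
  have hP0 : ((l ^ (0:ℝ) : ℝ) • mpow hY.1 (0:ℝ) - mpow hX.1 (0:ℝ)).PosSemidef := by
    rw [Real.rpow_zero, mpow_zero hX, mpow_zero hY, one_smul, sub_self]
    exact Matrix.PosSemidef.zero
  have hP1 : ((l ^ (1:ℝ) : ℝ) • mpow hY.1 (1:ℝ) - mpow hX.1 (1:ℝ)).PosSemidef := by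
    rw [Real.rpow_one, mpow_one hX, mpow_one hY]
    exact h1
  intro k
  induction k with
  | zero =>
    intro j hj
    interval_cases j
    · simpa using hP0
    · simpa using hP1
  | succ k ih =>
    intro j hj
    have h2k : (2:ℕ) ^ (k+1) = 2 * 2 ^ k := by ring
    set a := j / 2 with ha
    set b := j - j / 2 with hb
    have hab : a + b = j := by omega
    have hak : a ≤ 2 ^ k := by omega
    have hbk : b ≤ 2 ^ k := by omega
    have hmid := midpoint_step hX hY hl (ih a hak) (ih b hbk)
    have harith : ((a : ℝ) / 2 ^ k + (b : ℝ) / 2 ^ k) / 2 = (j : ℝ) / 2 ^ (k+1) := by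
      have h2 : ((a : ℝ) + b) = (j : ℝ) := by
        rw [← Nat.cast_add, hab]
      rw [← add_div, div_div, h2, pow_succ]
    rwa [harith] at hmid

lemma LH_scaled {X Y : Matrix n n ℂ} (hX : X.PosDef) (hY : Y.PosDef) {l : ℝ} (hl : 0 < l)
    (h1 : ((l : ℝ) • Y - X).PosSemidef) {t : ℝ} (ht : t ∈ Set.Icc (0:ℝ) 1) :
    ((l ^ t : ℝ) • mpow hY.1 t - mpow hX.1 t).PosSemidef := by
  obtain ⟨ht0, ht1⟩ := ht
  set tk : ℕ → ℝ := fun k => ((⌊t * 2 ^ k⌋₊ : ℝ) / 2 ^ k) with htk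
  have hmem : ∀ k, ((l ^ tk k : ℝ) • mpow hY.1 (tk k) - mpow hX.1 (tk k)).PosSemidef := by
    intro k
    apply LH_dyadic hX hY hl h1 k
    have h2 : t * 2 ^ k ≤ ((2 ^ k : ℕ) : ℝ) := by
      push_cast
      nlinarith [pow_pos (show (0:ℝ) < 2 by norm_num) k]
    calc ⌊t * 2 ^ k⌋₊ ≤ ⌊((2 ^ k : ℕ) : ℝ)⌋₊ := Nat.floor_mono h2
      _ = 2 ^ k := Nat.floor_natCast _
  have htkt : Filter.Tendsto tk Filter.atTop (nhds t) := by
    have hub : ∀ k, tk k ≤ t := by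
      intro k
      rw [htk]
      have := Nat.floor_le (by positivity : (0:ℝ) ≤ t * 2 ^ k)
      rw [div_le_iff₀ (by positivity : (0:ℝ) < (2:ℝ) ^ k)]
      linarith
    have hlb : ∀ k, t - (1/2) ^ k ≤ tk k := by
      intro k
      have hfl := Nat.lt_floor_add_one (t * 2 ^ k)
      have h2p : (0:ℝ) < (2:ℝ) ^ k := by positivity
      show t - (1/2:ℝ)^k ≤ (⌊t * 2 ^ k⌋₊ : ℝ) / 2 ^ k
      rw [le_div_iff₀ h2p]
      have hhalf : (1/2:ℝ)^k * 2^k = 1 := by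
        rw [← mul_pow]; norm_num
      have expand : (t - (1/2:ℝ)^k) * 2^k = t * 2^k - 1 := by
        rw [sub_mul, hhalf]
      rw [expand]
      linarith
    have hlim : Filter.Tendsto (fun k : ℕ => t - (1/2:ℝ) ^ k) Filter.atTop (nhds t) := by
      have h0 : Filter.Tendsto (fun k : ℕ => ((1/2:ℝ)) ^ k) Filter.atTop (nhds 0) := by
        apply tendsto_pow_atTop_nhds_zero_of_lt_one <;> norm_num
      simpa using Filter.Tendsto.sub tendsto_const_nhds h0
    exact tendsto_of_tendsto_of_tendsto_of_le_of_le hlim tendsto_const_nhds hlb hub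
  have hFcont : Continuous fun u : ℝ => (l ^ u : ℝ) • mpow hY.1 u - mpow hX.1 u := by
    exact ((rpow_fun_continuous hl).smul (mpow_continuous hY)).sub (mpow_continuous hX)
  have htends := (hFcont.tendsto t).comp htkt
  exact psd_isClosed.mem_of_tendsto htends (Filter.Eventually.of_forall hmem)

end Approx

/-- `wfac A B = W(A/B) = inf {λ > 0 : A ⪯ λ B}`. -/
noncomputable def wfac (A B : Matrix n n ℂ) : ℝ :=
  sInf {l : ℝ | 0 < l ∧ ((l : ℝ) • B - A).PosSemidef}

/-- The Thompson part metric on positive definite matrices,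
`δ_T(A,B) = ‖log(B^{-1/2} A B^{-1/2})‖ = max (log W(A/B)) (log W(B/A))`. -/
noncomputable def thompson (A B : Matrix n n ℂ) : ℝ :=
  max (Real.log (wfac A B)) (Real.log (wfac B A))

section Wfac

lemma exists_loewner_bound {A B : Matrix n n ℂ} (hA : A.PosDef) (hB : B.PosDef) :
    ∃ l : ℝ, 0 < l ∧ ((l : ℝ) • B - A).PosSemidef := by
  have hMh : (mpow hB.1 (-(1/2)))ᴴ = mpow hB.1 (-(1/2)) := (mpow_isHermitian' hB.1 _).eq
  have hCpd : (mpow hB.1 (-(1/2)) * A * mpow hB.1 (-(1/2))).PosDef := by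
    have := posDef_conj hA (mpow_posDef hB (-(1/2))).isUnit
    rwa [hMh] at this
  set c := 1 + ∑ i, |hCpd.1.eigenvalues i| with hc
  have hsum : 0 ≤ ∑ i, |hCpd.1.eigenvalues i| := Finset.sum_nonneg fun i _ => abs_nonneg _
  have hcpos : 0 < c := by rw [hc]; linarith
  have heig : ∀ i, hCpd.1.eigenvalues i ≤ c := by
    intro i
    have h1 : |hCpd.1.eigenvalues i| ≤ ∑ j, |hCpd.1.eigenvalues j| :=
      Finset.single_le_sum (f := fun j => |hCpd.1.eigenvalues j|)
        (fun j _ => abs_nonneg _) (Finset.mem_univ i)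
    calc hCpd.1.eigenvalues i ≤ |hCpd.1.eigenvalues i| := le_abs_self _
      _ ≤ ∑ j, |hCpd.1.eigenvalues j| := h1
      _ ≤ c := by rw [hc]; linarith
  have hpsd := herm_le_smul_one hCpd.1 heig
  have h3 := loewner_conj hpsd (mpow hB.1 (1/2))
  rw [(mpow_isHermitian' hB.1 (1/2)).eq] at h3
  have e1 : mpow hB.1 (1/2) * ((c : ℝ) • (1 : Matrix n n ℂ)) * mpow hB.1 (1/2)
      = (c : ℝ) • B := by
    rw [mul_smul_comm, smul_mul_assoc, mul_one,
      mpow_merge hB (show 1/2 + 1/2 = (1:ℝ) by ring), mpow_one hB]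
  have e2 : mpow hB.1 (1/2) * (mpow hB.1 (-(1/2)) * A * mpow hB.1 (-(1/2))) * mpow hB.1 (1/2)
      = A := by
    simp only [mul_assoc]
    rw [mpow_collapse hB (show 1/2 + -(1/2) = (0:ℝ) by ring),
      mpow_collapse' hB (show -(1/2) + 1/2 = (0:ℝ) by ring), mul_one]
  refine ⟨c, hcpos, ?_⟩
  rwa [e1, e2] at h3

lemma loewner_lower_bound [Nonempty n] {A B : Matrix n n ℂ} (hA : A.PosDef) (hB : B.PosDef) :
    ∃ c : ℝ, 0 < c ∧ ∀ l : ℝ, ((l : ℝ) • B - A).PosSemidef → c ≤ l := by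
  set x : n → ℂ := fun _ => 1 with hx
  have hx0 : x ≠ 0 := by
    intro h
    have := congrFun h (Classical.arbitrary n)
    simp [hx] at this
  have hp : 0 < (star x ⬝ᵥ (A *ᵥ x)).re := by
    exact (Complex.pos_iff.mp (hA.dotProduct_mulVec_pos hx0)).1
  have hq : 0 < (star x ⬝ᵥ (B *ᵥ x)).re := by
    exact (Complex.pos_iff.mp (hB.dotProduct_mulVec_pos hx0)).1
  refine ⟨(star x ⬝ᵥ (A *ᵥ x)).re / (star x ⬝ᵥ (B *ᵥ x)).re, div_pos hp hq, ?_⟩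
  intro l hl
  rw [div_le_iff₀ hq]
  have h0 := hl.dotProduct_mulVec_nonneg x
  have expand : star x ⬝ᵥ (((l : ℝ) • B - A) *ᵥ x)
      = (l : ℂ) * (star x ⬝ᵥ (B *ᵥ x)) - star x ⬝ᵥ (A *ᵥ x) := by
    rw [Matrix.sub_mulVec, dotProduct_sub, Matrix.smul_mulVec, dotProduct_smul,
      Complex.real_smul]
  rw [expand] at h0
  have hre := (Complex.nonneg_iff.mp h0).1
  simp only [Complex.sub_re, Complex.mul_re, Complex.ofReal_re, Complex.ofReal_im,
    zero_mul, sub_zero] at hre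
  linarith

lemma wfac_le' {A B : Matrix n n ℂ} {l : ℝ} (hl : 0 < l)
    (h : ((l : ℝ) • B - A).PosSemidef) : wfac A B ≤ l :=
  csInf_le ⟨0, fun y hy => le_of_lt hy.1⟩ ⟨hl, h⟩

lemma wfac_pos_mem [Nonempty n] {A B : Matrix n n ℂ} (hA : A.PosDef) (hB : B.PosDef) :
    0 < wfac A B ∧ ((wfac A B : ℝ) • B - A).PosSemidef := by
  obtain ⟨c, hc, hlb⟩ := loewner_lower_bound hA hB
  obtain ⟨L, hL, hLpsd⟩ := exists_loewner_bound hA hB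
  set S := {l : ℝ | 0 < l ∧ ((l : ℝ) • B - A).PosSemidef} with hS
  have hSne : S.Nonempty := ⟨L, hL, hLpsd⟩
  have hSbdd : BddBelow S := ⟨c, fun y hy => hlb y hy.2⟩
  have hSeq : S = {l : ℝ | ((l : ℝ) • B - A).PosSemidef} ∩ Set.Ici c := by
    ext l
    constructor
    · exact fun h => ⟨h.2, hlb l h.2⟩
    · exact fun h => ⟨lt_of_lt_of_le hc h.2, h.1⟩
  have hclosed : IsClosed S := by
    rw [hSeq]
    refine IsClosed.inter ?_ isClosed_Ici
    have hcont : Continuous fun l : ℝ => (l : ℝ) • B - A :=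
      (continuous_id.smul continuous_const).sub continuous_const
    exact psd_isClosed.preimage hcont
  have hmem := hclosed.csInf_mem hSne hSbdd
  have hwf : wfac A B = sInf S := rfl
  rw [hwf]
  exact ⟨hmem.1, hmem.2⟩

lemma subsingleton_psd [IsEmpty n] (M : Matrix n n ℂ) : M.PosSemidef := by
  constructor
  · ext i j
    exact (IsEmpty.false i).elim
  · intro x
    simp [Finsupp.sum, Finset.eq_empty_of_isEmpty x.support]

lemma wfac_empty [IsEmpty n] (A B : Matrix n n ℂ) : wfac A B = 0 := by
  have hset : {l : ℝ | 0 < l ∧ ((l : ℝ) • B - A).PosSemidef} = Set.Ioi 0 := by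
    ext l
    simp [Set.mem_Ioi, subsingleton_psd]
  rw [wfac, hset, csInf_Ioi]

lemma thompson_empty [IsEmpty n] (A B : Matrix n n ℂ) : thompson A B = 0 := by
  rw [thompson, wfac_empty, wfac_empty, Real.log_zero, max_self]

end Wfac

/-- Power nonexpansivity of the Thompson metric:
`δ_T(X^t, Y^t) ≤ |t| δ_T(X,Y)` for `t ∈ [-1,1]`. -/
theorem thompson_power {X Y : Matrix n n ℂ} (hX : X.PosDef) (hY : Y.PosDef)
    {t : ℝ} (ht : t ∈ Set.Icc (-1 : ℝ) 1) :
    thompson (mpow hX.1 t) (mpow hY.1 t) ≤ |t| * thompson X Y := by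
  rcases isEmpty_or_nonempty n with hne | hne
  · rw [thompson_empty, thompson_empty, mul_zero]
  · obtain ⟨ht0, ht1⟩ := ht
    obtain ⟨hm1pos, hm1⟩ := wfac_pos_mem hX hY
    obtain ⟨hm2pos, hm2⟩ := wfac_pos_mem hY hX
    have hp1 : 0 < wfac (mpow hX.1 t) (mpow hY.1 t) :=
      (wfac_pos_mem (mpow_posDef hX t) (mpow_posDef hY t)).1
    have hp2 : 0 < wfac (mpow hY.1 t) (mpow hX.1 t) :=
      (wfac_pos_mem (mpow_posDef hY t) (mpow_posDef hX t)).1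
    rcases le_or_gt 0 t with htpos | htneg
    · have hs1 := LH_scaled hX hY hm1pos hm1 ⟨htpos, ht1⟩
      have hs2 := LH_scaled hY hX hm2pos hm2 ⟨htpos, ht1⟩
      have hw1 : wfac (mpow hX.1 t) (mpow hY.1 t) ≤ (wfac X Y) ^ t :=
        wfac_le' (Real.rpow_pos_of_pos hm1pos t) hs1
      have hw2 : wfac (mpow hY.1 t) (mpow hX.1 t) ≤ (wfac Y X) ^ t :=
        wfac_le' (Real.rpow_pos_of_pos hm2pos t) hs2
      rw [thompson, abs_of_nonneg htpos]
      apply max_le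
      · calc Real.log (wfac (mpow hX.1 t) (mpow hY.1 t))
            ≤ Real.log ((wfac X Y) ^ t) := Real.log_le_log hp1 hw1
          _ = t * Real.log (wfac X Y) := Real.log_rpow hm1pos t
          _ ≤ t * thompson X Y := mul_le_mul_of_nonneg_left (le_max_left _ _) htpos
      · calc Real.log (wfac (mpow hY.1 t) (mpow hX.1 t))
            ≤ Real.log ((wfac Y X) ^ t) := Real.log_le_log hp2 hw2
          _ = t * Real.log (wfac Y X) := Real.log_rpow hm2pos t
          _ ≤ t * thompson X Y := mul_le_mul_of_nonneg_left (le_max_right _ _) htpos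
    · have hs0 : (0:ℝ) ≤ -t := by linarith
      have hs1le : -t ≤ 1 := by linarith
      have hd1 := LH_scaled hX hY hm1pos hm1 (Set.mem_Icc.mpr ⟨hs0, hs1le⟩)
      have hi1 := inv_antitone_scaled hX hY (Real.rpow_pos_of_pos hm1pos (-t)) (-t) hd1
      rw [neg_neg] at hi1
      have hd2 := LH_scaled hY hX hm2pos hm2 (Set.mem_Icc.mpr ⟨hs0, hs1le⟩)
      have hi2 := inv_antitone_scaled hY hX (Real.rpow_pos_of_pos hm2pos (-t)) (-t) hd2
      rw [neg_neg] at hi2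
      have hw1 : wfac (mpow hY.1 t) (mpow hX.1 t) ≤ (wfac X Y) ^ (-t) :=
        wfac_le' (Real.rpow_pos_of_pos hm1pos (-t)) hi1
      have hw2 : wfac (mpow hX.1 t) (mpow hY.1 t) ≤ (wfac Y X) ^ (-t) :=
        wfac_le' (Real.rpow_pos_of_pos hm2pos (-t)) hi2
      rw [thompson, abs_of_neg htneg]
      apply max_le
      · calc Real.log (wfac (mpow hX.1 t) (mpow hY.1 t))
            ≤ Real.log ((wfac Y X) ^ (-t)) := Real.log_le_log hp1 hw2
          _ = (-t) * Real.log (wfac Y X) := Real.log_rpow hm2pos (-t)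
          _ ≤ (-t) * thompson X Y := mul_le_mul_of_nonneg_left (le_max_right _ _) hs0
      · calc Real.log (wfac (mpow hY.1 t) (mpow hX.1 t))
            ≤ Real.log ((wfac X Y) ^ (-t)) := Real.log_le_log hp2 hw1
          _ = (-t) * Real.log (wfac X Y) := Real.log_rpow hm1pos (-t)
          _ ≤ (-t) * thompson X Y := mul_le_mul_of_nonneg_left (le_max_left _ _) hs0


end CGO
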